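/- For standard Levi subgroups L, L' of G with simple-root subsets Δ_L, Δ_{L'} ⊆ Δ, the intersection of the open sub-monoid-schemes D(X_*(T)_{- /L}) and D(X_*(T)_{- /L'}) inside D(X_*(T)_-) equals D(X_*(T)_{- /L''}) where Δ_{L''} = Δ_L ∩ Δ_{L'}. At the level of monoids: X_*(T)_{- /L} + X_*(T)_{- /L'} generate, and a monoid homomorphism s : X_*(T)_- → (k,·) extends to both X_*(T)_{- /L} and X_*(T)_{- /L'} iff it extends to X_*(T)_{- /L''}. -/

import Mathlib

/-!
Statement 15: For standard Levis `L, L'` with simple-root subsets `Δ_L, Δ_{L'} ⊆ Δ`,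
the intersection of the open sub-monoid-schemes `D(X_*(T)_{−∕L})` and
`D(X_*(T)_{−∕L'})` inside `D(X_*(T)_-)` equals `D(X_*(T)_{−∕L''})` where
`Δ_{L''} = Δ_L ∩ Δ_{L'}`.  Two incarnations are formalized:
(1) at the level of `k`-points: a monoid homomorphism `s : X_*(T)_- → (k,·)`
extends to both `X_*(T)_{−∕L}` and `X_*(T)_{−∕L'}` iff it extends to
`X_*(T)_{−∕L''}`;
(2) at the level of spectra: the open sets `D(f_L) ∩ D(f_{L'}) = D(f_{L''})`
in `Spec F_p[X_*(T)_-]`, where `f_L = ∏_{α ∈ Δ∖Δ_L} e^{λ_α}` (with `λ_α` as in the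
earlier context: antidominant, `⟨α, λ_α⟩ < 0`, `⟨β, λ_α⟩ = 0` for `β ≠ α`).
-/

/-- `{λ ∈ X : ⟨α i, λ⟩ ≤ 0 for all i ∈ S}`. -/
def antidomSubmonoid {X : Type} [AddCommGroup X] {ι : Type} (α : ι → X →+ ℤ)
    (S : Set ι) : AddSubmonoid X where
  carrier := {x | ∀ i ∈ S, α i x ≤ 0}
  zero_mem' := by intro i _; simp
  add_mem' := by
    intro a b ha hb i hi
    simpa [map_add] using add_nonpos (ha i hi) (hb i hi)

lemma coe_incl {X : Type} [AddCommMonoid X] {S T : AddSubmonoid X} (h : S ≤ T) (m : S) :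
    (AddSubmonoid.inclusion h m : X) = (m : X) := rfl

theorem ext_iff_aux
    {k : Type} [Field k]
    {X : Type} [AddCommGroup X] {ι : Type} [Fintype ι] [DecidableEq ι]
    (α : ι → X →+ ℤ) (S : Finset ι)
    (lam : ι → antidomSubmonoid α (Set.univ : Set ι))
    (hneg : ∀ i, α i (lam i : X) < 0)
    (horth : ∀ i j, j ≠ i → α j (lam i : X) = 0)
    (hle : antidomSubmonoid α (Set.univ : Set ι) ≤ antidomSubmonoid α (↑S : Set ι))
    (s : antidomSubmonoid α (Set.univ : Set ι) → k)
    (hs0 : s 0 = 1) (hsadd : ∀ a b, s (a + b) = s a * s b) :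
    (∃ t : antidomSubmonoid α (↑S : Set ι) → k, t 0 = 1 ∧
        (∀ a b, t (a + b) = t a * t b) ∧
        ∀ m, t (AddSubmonoid.inclusion hle m) = s m) ↔
      ∀ i ∉ S, s (lam i) ≠ 0 := by
  have s_nsmul : ∀ (n : ℕ) (a : antidomSubmonoid α (Set.univ : Set ι)),
      s (n • a) = s a ^ n := by
    intro n a
    induction n with
    | zero => simpa using hs0
    | succ n ih => rw [succ_nsmul, hsadd, ih, pow_succ]
  have s_sum : ∀ (T : Finset ι) (g : ι → antidomSubmonoid α (Set.univ : Set ι)),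
      s (∑ i ∈ T, g i) = ∏ i ∈ T, s (g i) := by
    intro T g
    induction T using Finset.induction with
    | empty => simpa using hs0
    | insert _ _ h ih => rw [Finset.sum_insert h, hsadd, ih, Finset.prod_insert h]
  constructor
  · rintro ⟨t, ht0, htadd, hts⟩ i hi
    have hmem : -((lam i : antidomSubmonoid α (Set.univ : Set ι)) : X) ∈
        antidomSubmonoid α (↑S : Set ι) := by
      intro j hj
      have hji : j ≠ i := by rintro rfl; exact hi hj
      rw [map_neg, horth i j hji, neg_zero]
    intro h0
    have key : t (AddSubmonoid.inclusion hle (lam i) + ⟨-((lam i : _) : X), hmem⟩) = t 0 := by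
      congr 1
      ext
      push_cast [coe_incl]
      exact add_neg_cancel _
    rw [htadd, hts, ht0, h0, zero_mul] at key
    exact zero_ne_one key
  · intro hnz
    set lT : antidomSubmonoid α (Set.univ : Set ι) := ∑ i ∈ Sᶜ, lam i with hlT
    have hlTcoe : ((lT : _) : X) = ∑ i ∈ Sᶜ, ((lam i : _) : X) :=
      AddSubmonoidClass.coe_finset_sum _ _
    have hαlT : ∀ i, α i ((lT : _) : X) = if i ∈ Sᶜ then α i (lam i : X) else 0 := by
      intro i
      rw [hlTcoe, map_sum]
      by_cases h : i ∈ Sᶜ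
      · rw [if_pos h]
        exact Finset.sum_eq_single_of_mem i h (fun j hj hji => horth j i hji.symm)
      · rw [if_neg h]
        exact Finset.sum_eq_zero (fun j hj => horth j i (by rintro rfl; exact h hj))
    have hslT : s lT ≠ 0 := by
      rw [hlT, s_sum]
      exact Finset.prod_ne_zero_iff.2 fun i hi => hnz i (Finset.mem_compl.1 hi)
    set N : antidomSubmonoid α (↑S : Set ι) → ℕ :=
      fun x => ∑ j ∈ Sᶜ, (α j (x : X)).toNat with hN
    have hmem : ∀ x : antidomSubmonoid α (↑S : Set ι),
        ((x : X) + N x • ((lT : _) : X)) ∈ antidomSubmonoid α (Set.univ : Set ι) := by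
      intro x i _
      rw [map_add, map_nsmul, hαlT i]
      by_cases h : i ∈ S
      · have hx := x.2 i h
        rw [if_neg (by simpa using h)]
        simpa using hx
      · rw [if_pos (Finset.mem_compl.2 h)]
        have h1 : ((α i (x : X)).toNat : ℤ) ≤ (N x : ℤ) := by
          exact_mod_cast Finset.single_le_sum (f := fun j => (α j (x : X)).toNat)
            (fun j _ => Nat.zero_le _) (Finset.mem_compl.2 h)
        have h2 : α i (x : X) ≤ (N x : ℤ) := le_trans (Int.self_le_toNat _) h1
        have h3 : (N x : ℤ) * α i (lam i : X) ≤ (N x : ℤ) * (-1) :=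
          mul_le_mul_of_nonneg_left (by have := hneg i; omega) (by positivity)
        have h4 : N x • α i (lam i : X) = (N x : ℤ) * α i (lam i : X) := by
          rw [nsmul_eq_mul]
        omega
    set ext : antidomSubmonoid α (↑S : Set ι) → antidomSubmonoid α (Set.univ : Set ι) :=
      fun x => ⟨(x : X) + N x • ((lT : _) : X), hmem x⟩ with hext
    have W : ∀ (y z : antidomSubmonoid α (Set.univ : Set ι)) (m n : ℕ),
        ((y : X) + m • ((lT : _) : X) = (z : X) + n • ((lT : _) : X)) →
        s y * s lT ^ m = s z * s lT ^ n := by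
      intro y z m n h
      have heq : y + m • lT = z + n • lT := by
        ext
        push_cast
        exact h
      calc s y * s lT ^ m = s (y + m • lT) := by rw [hsadd, s_nsmul]
        _ = s (z + n • lT) := by rw [heq]
        _ = s z * s lT ^ n := by rw [hsadd, s_nsmul]
    refine ⟨fun x => s (ext x) / s lT ^ N x, ?_, ?_, ?_⟩
    · show s (ext 0) / s lT ^ N 0 = 1
      have hW := W (ext 0) 0 0 (N 0) (by simp [hext])
      simp only [pow_zero, mul_one, hs0, one_mul] at hW
      rw [hW, div_self (pow_ne_zero _ hslT)]
    · intro a b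
      show s (ext (a + b)) / s lT ^ N (a + b) = s (ext a) / s lT ^ N a * (s (ext b) / s lT ^ N b)
      rw [div_mul_div_comm, ← hsadd, ← pow_add,
        div_eq_div_iff (pow_ne_zero _ hslT) (pow_ne_zero _ hslT)]
      refine W (ext (a + b)) (ext a + ext b) (N a + N b) (N (a + b)) ?_
      push_cast [hext]
      rw [add_smul]
      abel
    · intro m
      show s (ext (AddSubmonoid.inclusion hle m)) / s lT ^ N (AddSubmonoid.inclusion hle m) = s m
      have h1 : ext (AddSubmonoid.inclusion hle m)
          = m + N (AddSubmonoid.inclusion hle m) • lT := by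
        ext
        push_cast [hext, coe_incl]
        rfl
      rw [h1, hsadd, s_nsmul, mul_div_assoc, div_self (pow_ne_zero _ hslT), mul_one]

theorem levi_open_subschemes_intersection
    (p : ℕ) [Fact p.Prime]
    {k : Type} [Field k]
    {X : Type} [AddCommGroup X] {ι : Type} [Fintype ι] [DecidableEq ι]
    (α : ι → X →+ ℤ)
    (ΔL ΔL' : Finset ι)
    (lam : ι → antidomSubmonoid α (Set.univ : Set ι))   -- the elements λα
    (hneg : ∀ i, α i (lam i : X) < 0)
    (horth : ∀ i j, j ≠ i → α j (lam i : X) = 0)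
    (hle : ∀ S : Set ι, antidomSubmonoid α (Set.univ : Set ι) ≤ antidomSubmonoid α S)
    -- a `k`-point of `D(X_*(T)_-)`, i.e. a monoid homomorphism `X_*(T)_- → (k,·)`:
    (s : antidomSubmonoid α (Set.univ : Set ι) → k)
    (hs0 : s 0 = 1) (hsadd : ∀ a b, s (a + b) = s a * s b) :
    -- (1) `s` extends to both `X_*(T)_{−∕L}` and `X_*(T)_{−∕L'}` iff it extends to
    --     `X_*(T)_{−∕L''}`, `Δ_{L''} = Δ_L ∩ Δ_{L'}`:
    (((∃ t : antidomSubmonoid α (↑ΔL : Set ι) → k, t 0 = 1 ∧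
          (∀ a b, t (a + b) = t a * t b) ∧
          ∀ m, t (AddSubmonoid.inclusion (hle _) m) = s m) ∧
        (∃ t : antidomSubmonoid α (↑ΔL' : Set ι) → k, t 0 = 1 ∧
          (∀ a b, t (a + b) = t a * t b) ∧
          ∀ m, t (AddSubmonoid.inclusion (hle _) m) = s m)) ↔
      (∃ t : antidomSubmonoid α (↑(ΔL ∩ ΔL') : Set ι) → k, t 0 = 1 ∧
          (∀ a b, t (a + b) = t a * t b) ∧
          ∀ m, t (AddSubmonoid.inclusion (hle _) m) = s m)) ∧
    -- (2) the corresponding open subsets of `Spec F_p[X_*(T)_-]` agree: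
    (PrimeSpectrum.basicOpen
        (AddMonoidAlgebra.single (∑ i ∈ ΔLᶜ, lam i) (1 : ZMod p)) ⊓
      PrimeSpectrum.basicOpen
        (AddMonoidAlgebra.single (∑ i ∈ ΔL'ᶜ, lam i) (1 : ZMod p)) =
      PrimeSpectrum.basicOpen
        (AddMonoidAlgebra.single (∑ i ∈ (ΔL ∩ ΔL')ᶜ, lam i) (1 : ZMod p))) := by
  
  constructor
  · rw [ext_iff_aux α ΔL lam hneg horth (hle _) s hs0 hsadd,
      ext_iff_aux α ΔL' lam hneg horth (hle _) s hs0 hsadd,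
      ext_iff_aux α (ΔL ∩ ΔL') lam hneg horth (hle _) s hs0 hsadd]
    constructor
    · rintro ⟨h1, h2⟩ i hi
      by_cases hL : i ∈ ΔL
      · exact h2 i (fun hm => hi (Finset.mem_inter.2 ⟨hL, hm⟩))
      · exact h1 i hL
    · intro h
      exact ⟨fun i hi => h i (fun hm => hi (Finset.mem_inter.1 hm).1),
        fun i hi => h i (fun hm => hi (Finset.mem_inter.1 hm).2)⟩
  · -- part (2)
    have mul1 : ∀ (a b : antidomSubmonoid α (Set.univ : Set ι)),
        AddMonoidAlgebra.single a (1 : ZMod p) * AddMonoidAlgebra.single b (1 : ZMod p)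
          = AddMonoidAlgebra.single (a + b) (1 : ZMod p) := by
      intro a b
      rw [AddMonoidAlgebra.single_mul_single, one_mul]
    apply le_antisymm
    · have key : (∑ i ∈ ΔLᶜ, lam i) + (∑ i ∈ ΔL'ᶜ, lam i)
          = (∑ i ∈ (ΔL ∩ ΔL')ᶜ, lam i) + (∑ i ∈ (ΔL ∪ ΔL')ᶜ, lam i) := by
        rw [Finset.compl_inter, Finset.compl_union, Finset.sum_union_inter]
      calc PrimeSpectrum.basicOpen (AddMonoidAlgebra.single (∑ i ∈ ΔLᶜ, lam i) (1 : ZMod p)) ⊓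
            PrimeSpectrum.basicOpen (AddMonoidAlgebra.single (∑ i ∈ ΔL'ᶜ, lam i) (1 : ZMod p))
          = PrimeSpectrum.basicOpen
            (AddMonoidAlgebra.single (∑ i ∈ (ΔL ∩ ΔL')ᶜ, lam i) (1 : ZMod p) *
             AddMonoidAlgebra.single (∑ i ∈ (ΔL ∪ ΔL')ᶜ, lam i) (1 : ZMod p)) := by
            rw [← PrimeSpectrum.basicOpen_mul, mul1, mul1, key]
        _ ≤ _ := PrimeSpectrum.basicOpen_mul_le_left _ _
    · refine le_inf ?_ ?_
      · have key : (∑ i ∈ (ΔL ∩ ΔL')ᶜ, lam i)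
            = (∑ i ∈ ΔLᶜ, lam i) + (∑ i ∈ (ΔL ∩ ΔL')ᶜ \ ΔLᶜ, lam i) := by
          rw [add_comm, Finset.sum_sdiff (Finset.compl_subset_compl.2 Finset.inter_subset_left)]
        rw [key, ← mul1]
        exact PrimeSpectrum.basicOpen_mul_le_left _ _
      · have key : (∑ i ∈ (ΔL ∩ ΔL')ᶜ, lam i)
            = (∑ i ∈ ΔL'ᶜ, lam i) + (∑ i ∈ (ΔL ∩ ΔL')ᶜ \ ΔL'ᶜ, lam i) := by
          rw [add_comm, Finset.sum_sdiff (Finset.compl_subset_compl.2 Finset.inter_subset_right)]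
        rw [key, ← mul1]
        exact PrimeSpectrum.basicOpen_mul_le_left _ _
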